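/- In the Pa^c(σ,γ) model, assume γ*_i = ∑_{j=1}^{n+1} c_{i,j}γ_j > 1 for every i (so all X_i, and hence X_+ = max_{1≤i≤n} X_i, are integrable). Fix q ∈ [0,1) and put t_q = VaR_q[X_+] = inf{x : ν{X_+ ≤ x} ≥ q}. Then the Conditional Tail Expectation of the maximum decomposes as an alternating sum over sub-minima: (1−q)·CTE_q[X_+] := ∫_{{X_+ > t_q}} X_+ dν = ∑_{∅ ≠ S ⊆ {1,…,n}} (−1)^{|S|−1} · ∫_{{X_{S−} > t_q}} X_{S−} dν, where X_{S−} = min_{i∈S} X_i. -/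

import Mathlib

open MeasureTheory ProbabilityTheory Real

section IE
open Finset

private lemma filter_nonempty_powerset_singleton' {ι : Type*} [DecidableEq ι] (a : ι) :
    ({a} : Finset ι).powerset.filter Finset.Nonempty = {{a}} := by
  ext S
  simp only [mem_filter, mem_powerset, mem_singleton, subset_singleton_iff,
    Finset.nonempty_iff_ne_empty]
  constructor
  · rintro ⟨h1 | h1, h2⟩ <;> tauto
  · rintro rfl; simp

private lemma ie_sum {ι : Type*} [DecidableEq ι] (A : Finset ι) (hA : A.Nonempty) (z : ι → ℝ) :
    ∑ S ∈ A.powerset.filter Finset.Nonempty, (-1:ℝ)^(S.card - 1) * sInf (z '' S)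
      = A.sup' hA z := by
  induction hA using Finset.Nonempty.cons_induction generalizing z with
  | singleton a =>
      rw [filter_nonempty_powerset_singleton', Finset.sum_singleton]
      simp
  | cons a A' ha hA' ih =>
      have hdisj : Disjoint (A'.powerset.filter Finset.Nonempty)
          ((A'.powerset.image (insert a)).filter Finset.Nonempty) := by
        rw [Finset.disjoint_left]
        intro S h1 h2
        rw [mem_filter, mem_powerset] at h1
        rw [mem_filter, mem_image] at h2
        obtain ⟨⟨T, hT, rfl⟩, -⟩ := h2
        exact ha (h1.1 (mem_insert_self a T))
      have himg : (A'.powerset.image (insert a)).filter Finset.Nonempty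
          = A'.powerset.image (insert a) := by
        apply Finset.filter_true_of_mem
        intro S hS
        rw [mem_image] at hS
        obtain ⟨T, hT, rfl⟩ := hS
        exact insert_nonempty a T
      rw [show (cons a A' ha).powerset = (insert a A').powerset from by
          rw [Finset.cons_eq_insert]]
      rw [Finset.powerset_insert, Finset.filter_union,
        Finset.sum_union hdisj, himg, ih z, Finset.sup'_cons hA']
      have hinj : ∀ T ∈ A'.powerset, ∀ T' ∈ A'.powerset,
          insert a T = insert a T' → T = T' := by
        intro T hT T' hT' h
        rw [mem_powerset] at hT hT'
        have h1 : a ∉ T := fun hx => ha (hT hx)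
        have h2 : a ∉ T' := fun hx => ha (hT' hx)
        rw [← Finset.erase_insert h1, ← Finset.erase_insert h2, h]
      rw [Finset.sum_image hinj]
      have hterm : ∀ T ∈ A'.powerset,
          (-1:ℝ)^((insert a T).card - 1) * sInf (z '' ↑(insert a T))
            = (if T.Nonempty then
                -((-1:ℝ)^(T.card - 1) * sInf ((fun i => z a ⊓ z i) '' ↑T)) else z a) := by
        intro T hT
        rw [mem_powerset] at hT
        have haT : a ∉ T := fun hx => ha (hT hx)
        rw [Finset.card_insert_of_notMem haT]
        by_cases hTn : T.Nonempty
        · rw [if_pos hTn]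
          have h1 : sInf (z '' ↑(insert a T)) = z a ⊓ sInf (z '' ↑T) := by
            rw [← Finset.inf'_eq_csInf_image _ (insert_nonempty a T),
              ← Finset.inf'_eq_csInf_image _ hTn, Finset.inf'_insert hTn]
          have h2 : z a ⊓ sInf (z '' ↑T) = sInf ((fun i => z a ⊓ z i) '' ↑T) := by
            rw [← Finset.inf'_eq_csInf_image _ hTn, ← Finset.inf'_eq_csInf_image _ hTn,
              Finset.apply_inf'_eq_inf'_comp hTn (fun x => z a ⊓ x)
                (fun x y => inf_inf_distrib_left (z a) x y)]
            rfl
          have h3 : (-1:ℝ)^(T.card + 1 - 1) = -((-1:ℝ)^(T.card - 1)) := by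
            have hc : T.card - 1 + 1 = T.card := Nat.succ_pred_eq_of_pos hTn.card_pos
            rw [Nat.add_sub_cancel]
            conv_lhs => rw [← hc, pow_succ]
            ring
          rw [h1, h2, h3]
          ring
        · rw [if_neg hTn, Finset.not_nonempty_iff_eq_empty] at *
          subst hTn
          simp
      rw [Finset.sum_congr rfl hterm, Finset.sum_ite]
      have hfe : A'.powerset.filter (fun T => ¬ T.Nonempty) = {∅} := by
        ext T
        simp only [mem_filter, mem_powerset, Finset.not_nonempty_iff_eq_empty, mem_singleton]
        exact ⟨fun h => h.2, fun h => ⟨h ▸ Finset.empty_subset A', h⟩⟩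
      have hneg : ∑ T ∈ A'.powerset.filter Finset.Nonempty,
          -((-1:ℝ)^(T.card - 1) * sInf ((fun i => z a ⊓ z i) '' ↑T))
          = -(z a ⊓ A'.sup' hA' z) := by
        rw [Finset.sum_neg_distrib, ih (fun i => z a ⊓ z i)]
        have hsup : (A'.sup' hA' fun i => z a ⊓ z i) = z a ⊓ A'.sup' hA' z :=
          (Finset.comp_sup'_eq_sup'_comp hA' (fun x => z a ⊓ x)
            (fun x y => min_max_distrib_left (z a) x y)).symm
        rw [hsup]
      rw [hneg, hfe, Finset.sum_singleton]
      rcases le_total (z a) (A'.sup' hA' z) with h | h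
      · rw [inf_eq_left.mpr h, sup_eq_right.mpr h]; ring
      · rw [inf_eq_right.mpr h, sup_eq_left.mpr h]; ring

private lemma inf_image_comp {ι : Type*} (S : Finset ι) (hS : S.Nonempty) (x : ι → ℝ) (g : ℝ → ℝ)
    (hg : Monotone g) : sInf ((fun i => g (x i)) '' ↑S) = g (sInf (x '' ↑S)) := by
  rw [← Finset.inf'_eq_csInf_image _ hS, ← Finset.inf'_eq_csInf_image _ hS,
    Finset.apply_inf'_eq_inf'_comp hS g (fun a b => hg.map_min)]
  rfl

private lemma sup'_comp_mono {ι : Type*} (A : Finset ι) (hA : A.Nonempty) (x : ι → ℝ) (g : ℝ → ℝ)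
    (hg : Monotone g) : A.sup' hA (fun i => g (x i)) = g (A.sup' hA x) := by
  rw [Finset.comp_sup'_eq_sup'_comp hA g (fun a b => hg.map_max)]
  rfl

private lemma ie_threshold {ι : Type*} [DecidableEq ι] (A : Finset ι) (hA : A.Nonempty)
    (t : ℝ) (x : ι → ℝ) :
    (if t < A.sup' hA x then A.sup' hA x else 0)
      = ∑ S ∈ A.powerset.filter Finset.Nonempty,
          (-1:ℝ)^(S.card - 1) * (if t < sInf (x '' ↑S) then sInf (x '' ↑S) else 0) := by
  have hmono1 : Monotone (fun v : ℝ => v ⊔ t) := fun a b h => sup_le_sup_right h t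
  have hmono2 : Monotone (fun v : ℝ => if t < v then (1:ℝ) else 0) := by
    intro a b hab
    dsimp only
    split_ifs with h1 h2
    · norm_num
    · exact absurd (h1.trans_le hab) h2
    · norm_num
    · norm_num
  have key : ∀ m : ℝ, (if t < m then m else 0)
      = (m ⊔ t) + t * (if t < m then (1:ℝ) else 0) - t * 1 := by
    intro m
    rcases lt_or_ge t m with h | h
    · rw [if_pos h, if_pos h, sup_eq_left.mpr h.le]; ring
    · rw [if_neg (not_lt.mpr h), if_neg (not_lt.mpr h), sup_eq_right.mpr h]; ring
  have h1' : ∑ S ∈ A.powerset.filter Finset.Nonempty,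
      (-1:ℝ)^(S.card - 1) * (sInf (x '' ↑S) ⊔ t) = A.sup' hA x ⊔ t := by
    rw [← sup'_comp_mono A hA x _ hmono1, ← ie_sum A hA (fun i => x i ⊔ t)]
    refine Finset.sum_congr rfl fun S hS => ?_
    rw [inf_image_comp S (Finset.mem_filter.mp hS).2 x _ hmono1]
  have h2' : ∑ S ∈ A.powerset.filter Finset.Nonempty,
      (-1:ℝ)^(S.card - 1) * (if t < sInf (x '' ↑S) then (1:ℝ) else 0)
      = (if t < A.sup' hA x then (1:ℝ) else 0) := by
    rw [← sup'_comp_mono A hA x _ hmono2, ← ie_sum A hA (fun i => if t < x i then (1:ℝ) else 0)]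
    refine Finset.sum_congr rfl fun S hS => ?_
    rw [inf_image_comp S (Finset.mem_filter.mp hS).2 x _ hmono2]
  have h3' : ∑ S ∈ A.powerset.filter Finset.Nonempty,
      (-1:ℝ)^(S.card - 1) * (1:ℝ) = 1 := by
    have h := ie_sum A hA (fun _ => (1:ℝ))
    rw [Finset.sup'_const] at h
    calc ∑ S ∈ A.powerset.filter Finset.Nonempty, (-1:ℝ)^(S.card - 1) * (1:ℝ)
        = ∑ S ∈ A.powerset.filter Finset.Nonempty,
            (-1:ℝ)^(S.card - 1) * sInf ((fun _ : ι => (1:ℝ)) '' ↑S) :=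
          Finset.sum_congr rfl fun S hS => by
            rw [inf_image_comp S (Finset.mem_filter.mp hS).2 x (fun _ => (1:ℝ)) monotone_const]
      _ = 1 := h
  rw [key (A.sup' hA x)]
  rw [show (∑ S ∈ A.powerset.filter Finset.Nonempty,
      (-1:ℝ)^(S.card - 1) * (if t < sInf (x '' ↑S) then sInf (x '' ↑S) else 0))
      = ∑ S ∈ A.powerset.filter Finset.Nonempty,
        ((-1:ℝ)^(S.card - 1) * (sInf (x '' ↑S) ⊔ t)
          + t * ((-1:ℝ)^(S.card - 1) * (if t < sInf (x '' ↑S) then (1:ℝ) else 0))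
          - t * ((-1:ℝ)^(S.card - 1) * 1)) from
    Finset.sum_congr rfl fun S hS => by rw [key (sInf (x '' ↑S))]; ring]
  rw [Finset.sum_sub_distrib, Finset.sum_add_distrib, ← Finset.mul_sum, ← Finset.mul_sum,
    h1', h2', h3']

end IE

section Analytic

private lemma integrable_rpow_gammaMeasure {a p : ℝ} (ha : 0 < a) (hp : -a < p) :
    Integrable (fun x : ℝ => x ^ p) (gammaMeasure a 1) := by
  have hmeas : Measurable (gammaPDF a 1) := (measurable_gammaPDFReal a 1).ennreal_ofReal
  have hlt : ∀ᵐ x ∂(volume : Measure ℝ), gammaPDF a 1 x < ⊤ :=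
    ae_of_all _ fun x => ENNReal.ofReal_lt_top
  rw [gammaMeasure, integrable_withDensity_iff hmeas hlt]
  have hto : (fun x : ℝ => x ^ p * (gammaPDF a 1 x).toReal)
      = fun x => x ^ p * gammaPDFReal a 1 x := by
    funext x
    rw [gammaPDF, ENNReal.toReal_ofReal (gammaPDFReal_nonneg ha one_pos x)]
  rw [hto]
  have hU : Set.Iic (0:ℝ) ∪ Set.Ioi 0 = Set.univ := Set.Iic_union_Ioi
  rw [← integrableOn_univ, ← hU]
  apply IntegrableOn.union
  · have h1 : ∀ᵐ (x:ℝ), x ≠ 0 := by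
      rw [ae_iff]
      simpa using measure_singleton (0:ℝ)
    have h0 : ∀ᵐ x ∂(volume.restrict (Set.Iic (0:ℝ))), x ^ p * gammaPDFReal a 1 x = 0 := by
      filter_upwards [ae_restrict_of_ae h1, ae_restrict_mem measurableSet_Iic] with x hx hx2
      have hxneg : x < 0 := lt_of_le_of_ne hx2 hx
      rw [gammaPDFReal, if_neg (not_le.mpr hxneg), mul_zero]
    exact (integrable_zero _ _ _).congr (h0.mono fun x hx => hx.symm)
  · have hconv := Real.GammaIntegral_convergent (by linarith : 0 < p + a)
    have h2 := hconv.const_mul ((1:ℝ) ^ a / Gamma a)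
    apply h2.congr
    filter_upwards [ae_restrict_mem measurableSet_Ioi] with x (hx : 0 < x)
    rw [gammaPDFReal, if_pos hx.le, one_mul, show p + a - 1 = p + (a - 1) by ring,
      Real.rpow_add hx]
    ring

private lemma integrable_pi_prod_coord {m : ℕ} (μ : Fin m → Measure ℝ)
    (hμ : ∀ j, IsProbabilityMeasure (μ j)) (f : Fin m → ℝ → ℝ)
    (hf : ∀ j, Integrable (f j) (μ j)) :
    Integrable (fun y : Fin m → ℝ => ∏ j, f j (y j)) (Measure.pi μ) := by
  have : ∀ j, SigmaFinite (μ j) := fun j => by haveI := hμ j; exact inferInstance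
  exact Integrable.fin_nat_prod hf

private lemma integrable_eval_pi {m : ℕ} (μ : Fin m → Measure ℝ)
    (hμ : ∀ j, IsProbabilityMeasure (μ j)) (i : Fin m) (f : ℝ → ℝ)
    (hf : Integrable f (μ i)) :
    Integrable (fun y : Fin m → ℝ => f (y i)) (Measure.pi μ) := by
  have h := integrable_pi_prod_coord μ hμ (fun j x => if j = i then f x else 1)
    (fun j => by
      by_cases hj : j = i
      · subst hj; simpa using hf
      · haveI := hμ j
        simp only [if_neg hj]
        exact integrable_const 1)
  apply h.congr
  filter_upwards with y
  rw [Finset.prod_eq_single i (fun j _ hj => if_neg hj) (by simp)]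
  simp

private lemma gammaMeasure_Iic_zero {a r : ℝ} : gammaMeasure a r (Set.Iic 0) = 0 := by
  rw [gammaMeasure, withDensity_apply _ measurableSet_Iic,
    show Set.Iic (0:ℝ) = Set.Iio 0 ∪ {0} from (Set.Iio_union_right).symm,
    lintegral_union (measurableSet_singleton 0) (by simp)]
  rw [lintegral_gammaPDF_of_nonpos le_rfl, setLIntegral_measure_zero _ _ (measure_singleton 0)]
  simp

private lemma ae_pi_pos {m : ℕ} (γ : Fin m → ℝ) (hγ : ∀ j, 0 < γ j) :
    ∀ᵐ y ∂(Measure.pi fun j => gammaMeasure (γ j) 1), ∀ j, 0 < y j := by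
  haveI : ∀ j : Fin m, IsProbabilityMeasure (gammaMeasure (γ j) 1) :=
    fun j => isProbabilityMeasure_gammaMeasure (hγ j) one_pos
  rw [ae_all_iff]
  intro j
  rw [ae_iff]
  have hset : {y : Fin m → ℝ | ¬ 0 < y j} = Function.eval j ⁻¹' (Set.Iic 0) := by
    ext y; simp [not_lt]
  rw [hset]
  exact Measure.pi_eval_preimage_null _ gammaMeasure_Iic_zero

private lemma integrable_inv_sum {m : ℕ} (γ : Fin m → ℝ) (hγ : ∀ j, 0 < γ j) (b : Fin m → ℝ)
    (hb : ∀ j, b j = 0 ∨ b j = 1) (hsum : 1 < ∑ j, b j * γ j) :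
    Integrable (fun y : Fin m → ℝ => (∑ j, b j * y j)⁻¹)
      (Measure.pi fun j => gammaMeasure (γ j) 1) := by
  set γs : ℝ := ∑ j, b j * γ j with hγs_def
  have hγs : (0:ℝ) < γs := lt_trans one_pos hsum
  set θ : Fin m → ℝ := fun j => b j * γ j / γs with hθ_def
  have hb0 : ∀ j, 0 ≤ b j := fun j => by rcases hb j with h | h <;> rw [h] <;> norm_num
  have hθ0 : ∀ j, 0 ≤ θ j := fun j => by
    apply div_nonneg (mul_nonneg (hb0 j) (hγ j).le) hγs.le
  have hθsum : ∑ j, θ j = 1 := by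
    rw [hθ_def, ← Finset.sum_div, ← hγs_def, div_self hγs.ne']
  have hθlt : ∀ j, θ j < γ j := by
    intro j
    rcases hb j with h | h
    · rw [hθ_def]; simp only [h, zero_mul, zero_div]; exact hγ j
    · rw [hθ_def]; simp only [h, one_mul]
      rw [div_lt_iff₀ hγs]
      nlinarith [hγ j]
  have hθle : ∀ j, θ j ≤ b j := by
    intro j
    rcases hb j with h | h
    · rw [hθ_def]; simp [h]
    · show b j * γ j / γs ≤ b j
      rw [h, one_mul, div_le_one hγs, hγs_def]
      have := Finset.single_le_sum (f := fun k => b k * γ k)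
        (fun k _ => mul_nonneg (hb0 k) (hγ k).le) (Finset.mem_univ j)
      simpa [h] using this
  have hmaj : Integrable (fun y : Fin m → ℝ => ∏ j, (y j) ^ (-(θ j)))
      (Measure.pi fun j => gammaMeasure (γ j) 1) :=
    integrable_pi_prod_coord _ (fun j => isProbabilityMeasure_gammaMeasure (hγ j) one_pos)
      (fun j x => x ^ (-(θ j)))
      (fun j => integrable_rpow_gammaMeasure (hγ j) (by linarith [hθlt j]))
  have hmeas : Measurable (fun y : Fin m → ℝ => (∑ j, b j * y j)⁻¹) :=
    (Finset.measurable_sum _ (fun j _ => by fun_prop)).inv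
  apply hmaj.mono hmeas.aestronglyMeasurable
  filter_upwards [ae_pi_pos γ hγ] with y hy
  have hprodpos : 0 < ∏ j, (y j) ^ (θ j) :=
    Finset.prod_pos fun j _ => rpow_pos_of_pos (hy j) _
  have hamgm : ∏ j, (y j) ^ (θ j) ≤ ∑ j, θ j * y j :=
    Real.geom_mean_le_arith_mean_weighted Finset.univ θ y (fun j _ => hθ0 j) hθsum
      (fun j _ => (hy j).le)
  have h2 : ∑ j, θ j * y j ≤ ∑ j, b j * y j :=
    Finset.sum_le_sum fun j _ => mul_le_mul_of_nonneg_right (hθle j) (hy j).le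
  have hDpos : 0 < ∑ j, b j * y j := lt_of_lt_of_le hprodpos (hamgm.trans h2)
  have hprodeq : ∏ j, (y j) ^ (-(θ j)) = (∏ j, (y j) ^ (θ j))⁻¹ := by
    rw [← Finset.prod_inv_distrib]
    exact Finset.prod_congr rfl fun j _ => Real.rpow_neg (hy j).le _
  rw [Real.norm_eq_abs, Real.norm_eq_abs, abs_of_pos (inv_pos.mpr hDpos), hprodeq,
    abs_of_pos (inv_pos.mpr hprodpos)]
  exact inv_anti₀ hprodpos (hamgm.trans h2)

end Analytic

private lemma measurable_inf'_aux {δ : Type*} [MeasurableSpace δ] {ι : Type*} {s : Finset ι}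
    (hs : s.Nonempty) {f : ι → δ → ℝ} (hf : ∀ n ∈ s, Measurable (f n)) :
    Measurable (s.inf' hs f) :=
  Finset.inf'_induction hs _ (fun _f hf _g hg => hf.inf hg) fun n hn => hf n hn

private lemma indicator_lt_eq {α : Type*} (f : α → ℝ) (t : ℝ) (w : α) :
    Set.indicator {w | t < f w} f w = if t < f w then f w else 0 := by
  by_cases h : t < f w
  · rw [if_pos h]
    exact Set.indicator_of_mem (show w ∈ {w | t < f w} from h) f
  · rw [if_neg h]
    exact Set.indicator_of_notMem (show w ∉ {w | t < f w} from h) f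

/-- The `Pa^c(σ,γ)` model measure. -/
noncomputable def paretoModelMeasure (n : ℕ) (γ : Fin (n + 1) → ℝ) :
    Measure ((Fin n → ℝ) × (Fin (n + 1) → ℝ)) :=
  (Measure.pi fun _ : Fin n => gammaMeasure 1 1).prod
    (Measure.pi fun j => gammaMeasure (γ j) 1)

/-- The coordinates `X_i(λ,y) = σ_i λ_i / ∑_j c_{i,j} y_j`. -/
noncomputable def paretoCoord (n : ℕ) (σ : Fin n → ℝ) (c : Fin n → Fin (n + 1) → ℝ)
    (i : Fin n) (p : (Fin n → ℝ) × (Fin (n + 1) → ℝ)) : ℝ :=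
  σ i * p.1 i / ∑ j, c i j * p.2 j

/-- the tail expectation of the maximum `X_+ = max_i X_i` decomposes as an
alternating sum over the sub-minima `X_{S-} = min_{i∈S} X_i`:
`∫_{X_+ > t_q} X_+ dν = ∑_{∅≠S} (-1)^{|S|-1} ∫_{X_{S-} > t_q} X_{S-} dν`. -/
theorem conditional_tail_expectation_maximum
    (n : ℕ) (hn : 1 ≤ n)
    (σ : Fin n → ℝ) (hσ : ∀ i, 0 < σ i)
    (γ : Fin (n + 1) → ℝ) (hγ : ∀ j, 0 < γ j)
    (c : Fin n → Fin (n + 1) → ℝ) (hc : ∀ i j, c i j = 0 ∨ c i j = 1)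
    (hrow : ∀ i, ∃ j, c i j = 1)
    (hint : ∀ i, 1 < ∑ j, c i j * γ j)
    (Xmax : (Fin n → ℝ) × (Fin (n + 1) → ℝ) → ℝ)
    (hXmax : ∀ w, Xmax w = ⨆ i, paretoCoord n σ c i w)
    (Xmin : Finset (Fin n) → (Fin n → ℝ) × (Fin (n + 1) → ℝ) → ℝ)
    (hXmin : ∀ S w, Xmin S w = sInf ((fun i => paretoCoord n σ c i w) '' (S : Set (Fin n))))
    (q : ℝ) (hq : q ∈ Set.Ico (0 : ℝ) 1)
    (tq : ℝ)
    (htq : tq = sInf {x : ℝ |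
        q ≤ (paretoModelMeasure n γ {w | Xmax w ≤ x}).toReal}) :
    ∫ w in {w | tq < Xmax w}, Xmax w ∂(paretoModelMeasure n γ)
      = ∑ S ∈ Finset.univ.powerset.filter Finset.Nonempty,
          (-1 : ℝ) ^ (S.card - 1)
            * ∫ w in {w | tq < Xmin S w}, Xmin S w ∂(paretoModelMeasure n γ) := by
  classical
  haveI : NeZero n := ⟨Nat.one_le_iff_ne_zero.mp hn⟩
  haveI : Nonempty (Fin n) := ⟨⟨0, hn⟩⟩
  haveI hPM1 : IsProbabilityMeasure (gammaMeasure (1:ℝ) 1) :=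
    isProbabilityMeasure_gammaMeasure one_pos one_pos
  haveI hPM2 : ∀ j : Fin (n+1), IsProbabilityMeasure (gammaMeasure (γ j) 1) :=
    fun j => isProbabilityMeasure_gammaMeasure (hγ j) one_pos
  haveI hPMν : IsProbabilityMeasure (paretoModelMeasure n γ) := by
    unfold paretoModelMeasure
    infer_instance
  set ν := paretoModelMeasure n γ with hν
  set X : Fin n → (Fin n → ℝ) × (Fin (n + 1) → ℝ) → ℝ := paretoCoord n σ c with hX
  -- measurability
  have hXm : ∀ i, Measurable (X i) := by
    intro i
    have h1 : Measurable (fun p : (Fin n → ℝ) × (Fin (n+1) → ℝ) => p.1 i) :=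
      (measurable_pi_apply i).comp measurable_fst
    have h2 : ∀ j, Measurable (fun p : (Fin n → ℝ) × (Fin (n+1) → ℝ) => p.2 j) :=
      fun j => (measurable_pi_apply j).comp measurable_snd
    have hm : Measurable (fun p : (Fin n → ℝ) × (Fin (n+1) → ℝ) =>
        σ i * p.1 i / ∑ j, c i j * p.2 j) :=
      (h1.const_mul (σ i)).div
        (Finset.measurable_sum Finset.univ fun j _ => (h2 j).const_mul (c i j))
    exact hm
  have hXmax_eq : Xmax = Finset.univ.sup' Finset.univ_nonempty X := by
    funext w
    rw [hXmax w, ← Finset.sup'_univ_eq_ciSup, Finset.sup'_apply]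
  have hXmax_meas : Measurable Xmax := by
    rw [hXmax_eq]
    exact Finset.measurable_sup' _ fun i _ => hXm i
  have hXmin_eq : ∀ S (hS : S.Nonempty), Xmin S = S.inf' hS X := by
    intro S hS
    funext w
    rw [hXmin S w, ← Finset.inf'_eq_csInf_image _ hS, Finset.inf'_apply]
  have hXmin_meas : ∀ S, S.Nonempty → Measurable (Xmin S) := by
    intro S hS
    rw [hXmin_eq S hS]
    exact measurable_inf'_aux hS fun i _ => hXm i
  -- integrability of each coordinate
  have hXi_int : ∀ i, Integrable (X i) ν := by
    intro i
    have hid : Integrable (fun x : ℝ => x) (gammaMeasure 1 1) := by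
      have h := integrable_rpow_gammaMeasure one_pos (by norm_num : -(1:ℝ) < 1)
      simpa [Real.rpow_one] using h
    have hf : Integrable (fun l : Fin n → ℝ => σ i * l i)
        (Measure.pi fun _ : Fin n => gammaMeasure 1 1) :=
      (integrable_eval_pi _ (fun _ => hPM1) i _ hid).const_mul (σ i)
    have hg : Integrable (fun y : Fin (n+1) → ℝ => (∑ j, c i j * y j)⁻¹)
        (Measure.pi fun j => gammaMeasure (γ j) 1) :=
      integrable_inv_sum γ hγ (c i) (hc i) (hint i)
    have hmul := hf.mul_prod hg
    have heq : X i = fun z : (Fin n → ℝ) × (Fin (n+1) → ℝ) =>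
        (σ i * z.1 i) * (∑ j, c i j * z.2 j)⁻¹ :=
      funext fun p => div_eq_mul_inv _ _
    rw [hν]
    unfold paretoModelMeasure
    rw [heq]
    exact hmul
  -- integrability of the max
  have hXmax_int : Integrable Xmax ν := by
    apply Integrable.mono (integrable_finset_sum (μ := ν) Finset.univ
      fun i _ => (hXi_int i).abs) hXmax_meas.aestronglyMeasurable
    filter_upwards with w
    rw [Real.norm_eq_abs, Real.norm_eq_abs]
    have habs : abs (∑ i, |X i w|) = ∑ i, |X i w| :=
      abs_of_nonneg (Finset.sum_nonneg fun i _ => abs_nonneg _)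
    rw [habs, hXmax_eq]
    obtain ⟨i0, -, hi0⟩ := Finset.exists_mem_eq_sup' Finset.univ_nonempty
      (fun i => X i w)
    rw [Finset.sup'_apply, hi0]
    exact (Finset.single_le_sum (f := fun i => |X i w|)
      (fun i _ => abs_nonneg _) (Finset.mem_univ i0)).trans' le_rfl
  -- min ≤ max
  have hmin_le_max : ∀ S (hS : S.Nonempty) w, Xmin S w ≤ Xmax w := by
    intro S hS w
    obtain ⟨i0, hi0⟩ := hS
    have h1 : Xmin S w ≤ X i0 w := by
      rw [hXmin_eq S ⟨i0, hi0⟩]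
      exact Finset.inf'_le X hi0 w
    have h2 : X i0 w ≤ Xmax w := by
      rw [hXmax_eq, Finset.sup'_apply]
      exact Finset.le_sup' (fun a => X a w) (Finset.mem_univ i0)
    exact h1.trans h2
  -- integrability of indicators
  have hbound_int : Integrable (fun w => |Xmax w| + |tq|) ν :=
    hXmax_int.abs.add (integrable_const _)
  have hind_int : ∀ S, S.Nonempty →
      Integrable (Set.indicator {w | tq < Xmin S w} (Xmin S)) ν := by
    intro S hS
    apply Integrable.mono hbound_int
      (((hXmin_meas S hS).indicator
        (measurableSet_lt measurable_const (hXmin_meas S hS))).aestronglyMeasurable)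
    filter_upwards with w
    rw [Real.norm_eq_abs, Real.norm_eq_abs,
      abs_of_nonneg (by positivity : (0:ℝ) ≤ |Xmax w| + |tq|)]
    by_cases h : tq < Xmin S w
    · rw [Set.indicator_of_mem (show w ∈ {a | tq < Xmin S a} from h)]
      rcases le_or_gt 0 (Xmin S w) with h3 | h3
      · rw [abs_of_nonneg h3]
        have := (hmin_le_max S hS w).trans (le_abs_self _)
        linarith [abs_nonneg tq]
      · rw [abs_of_neg h3]
        have : -Xmin S w < -tq := by linarith
        have h4 : -tq ≤ |tq| := neg_le_abs tq
        linarith [abs_nonneg (Xmax w)]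
    · rw [Set.indicator_of_notMem (show w ∉ {a | tq < Xmin S a} from h)]
      simp only [abs_zero]
      positivity
  have hind_max_int : Integrable (Set.indicator {w | tq < Xmax w} Xmax) ν := by
    apply Integrable.mono hbound_int
      ((hXmax_meas.indicator
        (measurableSet_lt measurable_const hXmax_meas)).aestronglyMeasurable)
    filter_upwards with w
    rw [Real.norm_eq_abs, Real.norm_eq_abs,
      abs_of_nonneg (by positivity : (0:ℝ) ≤ |Xmax w| + |tq|)]
    by_cases h : tq < Xmax w
    · rw [Set.indicator_of_mem (show w ∈ {a | tq < Xmax a} from h)]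
      linarith [abs_nonneg tq]
    · rw [Set.indicator_of_notMem (show w ∉ {a | tq < Xmax a} from h)]
      simp only [abs_zero]
      positivity
  -- pointwise inclusion-exclusion identity
  have hpt : Set.indicator {w | tq < Xmax w} Xmax
      = fun w => ∑ S ∈ Finset.univ.powerset.filter Finset.Nonempty,
          (-1:ℝ)^(S.card - 1) * Set.indicator {w | tq < Xmin S w} (Xmin S) w := by
    funext w
    rw [indicator_lt_eq Xmax tq w]
    have hie := ie_threshold (Finset.univ : Finset (Fin n)) Finset.univ_nonempty tq
      (fun i => X i w)
    have hL : Xmax w = Finset.univ.sup' Finset.univ_nonempty (fun i => X i w) := by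
      rw [hXmax_eq, Finset.sup'_apply]
    rw [hL, hie]
    refine Finset.sum_congr rfl fun S hS => ?_
    have hSne : S.Nonempty := (Finset.mem_filter.mp hS).2
    have hmS : sInf ((fun i => X i w) '' ↑S) = Xmin S w := (hXmin S w).symm
    rw [hmS, indicator_lt_eq (Xmin S) tq w]
  -- assemble
  have hset1 : MeasurableSet {w | tq < Xmax w} :=
    measurableSet_lt measurable_const hXmax_meas
  rw [← integral_indicator hset1, hpt,
    integral_finset_sum _ (fun S hS =>
      ((hind_int S (Finset.mem_filter.mp hS).2).const_mul _))]
  refine Finset.sum_congr rfl fun S hS => ?_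
  have hSne : S.Nonempty := (Finset.mem_filter.mp hS).2
  rw [integral_const_mul, integral_indicator
    (measurableSet_lt measurable_const (hXmin_meas S hSne))]
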